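/- Fix β ∈ (0,1), α > 0, ε ∈ (0,1), and integers T, r with r = ⌈log(2/ε)/β⌉ and T ≥ log(2/ε)/β + 2α/(βε) + 1. For any integer r_x with 1 ≤ r_x ≤ r, we have (α + T - r_x)/(α(1-(1-β)^{r_x})/β + T - r_x) ≥ (α + T - r)/(α/β + T - r) ≥ (1 - ε/2). -/

import Mathlib

theorem stmt_19 (β α ε : ℝ) (hβ : β ∈ Set.Ioo (0:ℝ) 1) (hα : α > 0)
    (hε : ε ∈ Set.Ioo (0:ℝ) 1) (T r : ℕ)
    (hr : r = ⌈Real.log (2/ε) / β⌉₊)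
    (hT : (T : ℝ) ≥ Real.log (2/ε) / β + 2*α/(β*ε) + 1)
    (rx : ℕ) (hrx : 1 ≤ rx) (hrxr : rx ≤ r) :
    (α + (T : ℝ) - rx) / (α * (1 - (1 - β)^rx) / β + (T : ℝ) - rx) ≥
        (α + (T : ℝ) - r) / (α/β + (T : ℝ) - r) ∧
      (α + (T : ℝ) - r) / (α/β + (T : ℝ) - r) ≥ 1 - ε/2 := by
  obtain ⟨hβ0, hβ1⟩ := hβ
  obtain ⟨hε0, hε1⟩ := hε
  have h2ε : (1:ℝ) < 2/ε := by rw [lt_div_iff₀ hε0]; linarith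
  have hlog : 0 < Real.log (2/ε) := Real.log_pos h2ε
  have hx0 : 0 ≤ Real.log (2/ε) / β := le_of_lt (div_pos hlog hβ0)
  have hrle : (r:ℝ) < Real.log (2/ε)/β + 1 := by
    rw [hr]; exact Nat.ceil_lt_add_one hx0
  have hαβε : 0 < 2*α/(β*ε) := by positivity
  have hD : (T:ℝ) - r ≥ 2*α/(β*ε) := by linarith
  have hD0 : (0:ℝ) < (T:ℝ) - r := by linarith
  have hrxr' : (rx:ℝ) ≤ r := by exact_mod_cast hrxr
  have hc : (T:ℝ) - r ≤ (T:ℝ) - rx := by linarith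
  have hp0 : 0 < (1-β)^rx := pow_pos (by linarith) rx
  have hp1 : (1-β)^rx < 1 := pow_lt_one₀ (by linarith) (by linarith) (by omega)
  have hq0 : 0 < α/β := div_pos hα hβ0
  set q := α/β with hqdef
  have hq : α = β * q := by rw [hqdef, mul_div_assoc', mul_div_cancel_left₀ _ hβ0.ne']
  have hterm : α * (1 - (1-β)^rx) / β = q * (1 - (1-β)^rx) := by
    rw [hqdef]; field_simp
  have hden1 : 0 < α * (1 - (1-β)^rx) / β + (T:ℝ) - rx := by
    rw [hterm]
    have : 0 < q * (1 - (1-β)^rx) := mul_pos hq0 (by linarith)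
    linarith
  have hden2 : 0 < q + (T:ℝ) - r := by linarith
  constructor
  · rw [ge_iff_le, div_le_div_iff₀ hden2 hden1, hterm]
    nlinarith [mul_pos hq0 hp0, mul_pos hq0 hD0,
      mul_nonneg (mul_nonneg (le_of_lt hq0) (by linarith : (0:ℝ) ≤ ((T:ℝ)-rx) - ((T:ℝ)-r))) (by linarith : (0:ℝ) ≤ 1 - β),
      mul_pos (mul_pos hβ0 hq0) (mul_pos hq0 hp0),
      mul_pos (mul_pos hq0 hD0) hp0]
  · rw [ge_iff_le, le_div_iff₀ hden2]
    have h1 : 2*α/(β*ε) = 2*q/ε := by rw [hqdef]; field_simp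
    have hD' : 2*q/ε ≤ (T:ℝ) - r := by linarith [h1 ▸ hD]
    have hεd : 2*q ≤ ((T:ℝ) - r) * ε := (div_le_iff₀ hε0).mp hD'
    nlinarith [hεd, mul_pos hε0 hq0, mul_pos hβ0 hq0, hq]
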